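/- arXiv:2507.01709 — 2 statements merged into one kernel-verified Lean document; each statement's English description precedes it below -/
import Mathlib

section
/- For positive definite d×d matrices A and B, the d×d matrix C = A^{1/2}(A^{1/2} B A^{1/2})^{1/2} A^{-1/2} satisfies: the block matrix [[A, C],[Cᵀ, B]] is positive semidefinite, and tr(C) = tr((A^{1/2} B A^{1/2})^{1/2}). -/
open Matrix

open Classical in
/-- The positive semidefinite square root (zero if not positive semidefinite). -/
noncomputable def psqrt {d : ℕ} (X : Matrix (Fin d) (Fin d) ℝ) : Matrix (Fin d) (Fin d) ℝ :=
  if h : X.PosSemidef then (h.1.eigenvectorUnitary.1 * diagonal ((↑) ∘ (Real.sqrt ∘ h.1.eigenvalues)) *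
    (star h.1.eigenvectorUnitary : Matrix (Fin d) (Fin d) ℝ)) else 0

open Classical in
noncomputable def Matrix.PosSemidef.sqrt {d : ℕ} {X : Matrix (Fin d) (Fin d) ℝ}
    (h : X.PosSemidef) : Matrix (Fin d) (Fin d) ℝ :=
  h.1.eigenvectorUnitary.1 * diagonal ((↑) ∘ (Real.sqrt ∘ h.1.eigenvalues)) *
    (star h.1.eigenvectorUnitary : Matrix (Fin d) (Fin d) ℝ)

open Classical in
theorem Matrix.PosSemidef.posSemidef_sqrt {d : ℕ} {X : Matrix (Fin d) (Fin d) ℝ}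
    (h : X.PosSemidef) : h.sqrt.PosSemidef := by
  have hD : (diagonal ((↑) ∘ (Real.sqrt ∘ h.1.eigenvalues)) :
      Matrix (Fin d) (Fin d) ℝ).PosSemidef :=
    PosSemidef.diagonal (fun i => by simp [Real.sqrt_nonneg])
  have := hD.mul_mul_conjTranspose_same (h.1.eigenvectorUnitary.1)
  unfold Matrix.PosSemidef.sqrt
  rwa [star_eq_conjTranspose]

open Classical in
theorem Matrix.PosSemidef.sqrt_mul_self {d : ℕ} {X : Matrix (Fin d) (Fin d) ℝ}
    (h : X.PosSemidef) : h.sqrt * h.sqrt = X := by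
  unfold Matrix.PosSemidef.sqrt
  conv_rhs => rw [h.1.spectral_theorem, Unitary.conjStarAlgAut_apply]
  have hU : (star h.1.eigenvectorUnitary : Matrix (Fin d) (Fin d) ℝ) *
      h.1.eigenvectorUnitary.1 = 1 := Unitary.coe_star_mul_self _
  have hd : diagonal ((↑) ∘ (Real.sqrt ∘ h.1.eigenvalues)) *
      diagonal ((↑) ∘ (Real.sqrt ∘ h.1.eigenvalues)) =
      (diagonal (RCLike.ofReal ∘ h.1.eigenvalues) : Matrix (Fin d) (Fin d) ℝ) := by
    rw [diagonal_mul_diagonal]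
    congr 1
    funext i
    simp [Real.mul_self_sqrt (h.eigenvalues_nonneg i)]
  calc _ = h.1.eigenvectorUnitary.1 * diagonal ((↑) ∘ (Real.sqrt ∘ h.1.eigenvalues)) *
        ((star h.1.eigenvectorUnitary : Matrix (Fin d) (Fin d) ℝ) * h.1.eigenvectorUnitary.1) *
        diagonal ((↑) ∘ (Real.sqrt ∘ h.1.eigenvalues)) *
        (star h.1.eigenvectorUnitary : Matrix (Fin d) (Fin d) ℝ) := by
          simp only [Matrix.mul_assoc]
    _ = _ := by
      rw [hU, Matrix.mul_one, Matrix.mul_assoc (h.1.eigenvectorUnitary.1), hd]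

theorem stmt0 {d : ℕ} (A B : Matrix (Fin d) (Fin d) ℝ) (hA : A.PosDef) (hB : B.PosDef)
    (C : Matrix (Fin d) (Fin d) ℝ)
    (hC : C = psqrt A * psqrt (psqrt A * B * psqrt A) * (psqrt A)⁻¹) :
    (Matrix.fromBlocks A C Cᵀ B).PosSemidef ∧
      C.trace = (psqrt (psqrt A * B * psqrt A)).trace := by
  have hAps := hA.posSemidef
  set S := psqrt A with hS
  have hSdef : S = hAps.sqrt := by rw [hS, psqrt, dif_pos hAps]; rfl
  have hSps : S.PosSemidef := hSdef ▸ hAps.posSemidef_sqrt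
  have hSS : S * S = A := hSdef ▸ hAps.sqrt_mul_self
  have hSherm : Sᴴ = S := hSps.1
  have hSBS : (S * B * S).PosSemidef := by
    have := hB.posSemidef.mul_mul_conjTranspose_same S
    rwa [hSherm] at this
  set M := psqrt (S * B * S) with hM
  have hMdef : M = hSBS.sqrt := by rw [hM, psqrt, dif_pos hSBS]; rfl
  have hMps : M.PosSemidef := hMdef ▸ hSBS.posSemidef_sqrt
  have hMM : M * M = S * B * S := hMdef ▸ hSBS.sqrt_mul_self
  have hMherm : Mᴴ = M := hMps.1
  have htc : ∀ X : Matrix (Fin d) (Fin d) ℝ, Xᴴ = Xᵀ := fun X => by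
    ext i j; simp [conjTranspose_apply, transpose_apply]
  have hSu : IsUnit S.det := by
    have hAu : A.det ≠ 0 := hA.det_pos.ne'
    rw [← hSS, det_mul] at hAu
    exact isUnit_iff_ne_zero.mpr (left_ne_zero_of_mul hAu)
  have hSinv : S⁻¹ * S = 1 := nonsing_inv_mul S hSu
  have hSinv' : S * S⁻¹ = 1 := mul_nonsing_inv S hSu
  have hB' : B = S⁻¹ * M * (S⁻¹ * M)ᴴ := by
    rw [conjTranspose_mul, hMherm, conjTranspose_nonsing_inv, hSherm]
    calc B = S⁻¹ * (S * B * S) * S⁻¹ := by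
          rw [Matrix.mul_assoc S B S, ← Matrix.mul_assoc S⁻¹ S _, hSinv, Matrix.one_mul,
            Matrix.mul_assoc, hSinv', Matrix.mul_one]
      _ = S⁻¹ * M * (M * S⁻¹) := by rw [← hMM]; noncomm_ring
  have hCt : Cᵀ = S⁻¹ * M * S := by
    rw [← htc, hC, conjTranspose_mul, conjTranspose_mul, hMherm, conjTranspose_nonsing_inv,
      hSherm, Matrix.mul_assoc]
  constructor
  · have key : Matrix.fromBlocks A C Cᵀ B =
        (Matrix.fromBlocks S 0 (S⁻¹ * M) 0) * (Matrix.fromBlocks S 0 (S⁻¹ * M) 0)ᴴ := by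
      have hst : Sᵀ = S := by rw [← htc, hSherm]
      have hsti : S⁻¹ᵀ = S⁻¹ := by rw [← htc, conjTranspose_nonsing_inv, hSherm]
      have hmt : Mᵀ = M := by rw [← htc, hMherm]
      rw [fromBlocks_conjTranspose, fromBlocks_multiply]
      refine fromBlocks_inj.mpr ⟨?_, ?_, ?_, ?_⟩ <;>
        simp [hst, hsti, hmt, hSS, hC, hCt, Matrix.mul_assoc]
      · rw [hB', conjTranspose_mul, htc M, htc S⁻¹, hmt, hsti, Matrix.mul_assoc]
    rw [key]
    exact posSemidef_self_mul_conjTranspose _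
  · rw [hC, Matrix.trace_mul_comm, ← Matrix.mul_assoc, hSinv, Matrix.one_mul]
end

section
/- Let a, b > 0, ε > 0, and ρ ∈ (−1,1) with ab(1−ρ²) + ερ > 0. Define c_ε = (√((ab + ερ/(1−ρ²))² + ε²/4) − ε/2) · ab(1−ρ²)/(ab(1−ρ²) + ερ). Then |c_ε| < ab and the 2×2 matrix [[a², c_ε],[c_ε, b²]] is positive definite; moreover c_ε satisfies the scalar equation ε c = a² m (b² − c²/a²) where m = 1 + ερ/(ab(1−ρ²)). -/
open Matrix

theorem stmt17 (a b ε ρ : ℝ) (ha : 0 < a) (hb : 0 < b) (hε : 0 < ε)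
    (hρ : ρ ∈ Set.Ioo (-1 : ℝ) 1) (hden : 0 < a * b * (1 - ρ ^ 2) + ε * ρ)
    (m c : ℝ) (hm : m = 1 + ε * ρ / (a * b * (1 - ρ ^ 2)))
    (hc : c = (Real.sqrt ((a * b + ε * ρ / (1 - ρ ^ 2)) ^ 2 + ε ^ 2 / 4) - ε / 2) *
        (a * b * (1 - ρ ^ 2) / (a * b * (1 - ρ ^ 2) + ε * ρ))) :
    |c| < a * b ∧ (!![a ^ 2, c; c, b ^ 2]).PosDef ∧
      ε * c = a ^ 2 * m * (b ^ 2 - c ^ 2 / a ^ 2) := by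
  obtain ⟨hρ1, hρ2⟩ := hρ
  have hs : 0 < 1 - ρ ^ 2 := by nlinarith
  have hD : (a * b * (1 - ρ ^ 2) + ε * ρ) ≠ 0 := ne_of_gt hden
  have hab0 : a * b * (1 - ρ ^ 2) ≠ 0 := by positivity
  obtain ⟨k, hk⟩ : ∃ k : ℝ, k = a * b + ε * ρ / (1 - ρ ^ 2) := ⟨_, rfl⟩
  rw [← hk] at hc
  have hk_pos : 0 < k := by
    rw [hk]
    have h1 : -(a * b) < ε * ρ / (1 - ρ ^ 2) := by
      rw [lt_div_iff₀ hs]; nlinarith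
    linarith
  obtain ⟨S, hS⟩ : ∃ S : ℝ, S = Real.sqrt (k ^ 2 + ε ^ 2 / 4) := ⟨_, rfl⟩
  rw [← hS] at hc
  have hS_nonneg : 0 ≤ S := hS ▸ Real.sqrt_nonneg _
  have hS2 : S ^ 2 = k ^ 2 + ε ^ 2 / 4 := by
    rw [hS]; exact Real.sq_sqrt (by positivity)
  have hS_gt : ε / 2 < S := by
    nlinarith [pow_pos hk_pos 2]
  have hS_lt : S < k + ε / 2 := by
    nlinarith [mul_pos hk_pos hε]
  obtain ⟨r, hr⟩ : ∃ r : ℝ, r = a * b * (1 - ρ ^ 2) / (a * b * (1 - ρ ^ 2) + ε * ρ) := ⟨_, rfl⟩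
  rw [← hr] at hc
  have hr_pos : 0 < r := hr ▸ div_pos (by positivity) hden
  have hkr : k * r = a * b := by
    rw [hk, hr]; field_simp
  have hmr : m * r = 1 := by
    rw [hm, hr]; field_simp
  have hc_pos : 0 < c := by
    rw [hc]; exact mul_pos (by linarith) hr_pos
  have hc_lt : c < a * b := by
    rw [hc, ← hkr]
    exact mul_lt_mul_of_pos_right (by linarith) hr_pos
  have habs : |c| < a * b := by
    rw [abs_of_pos hc_pos]; exact hc_lt
  refine ⟨habs, ?_, ?_⟩
  · constructor
    · ext i j
      fin_cases i <;> fin_cases j <;> simp [Matrix.conjTranspose_apply]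
    · intro x hx
      have hx' : x 0 ≠ 0 ∨ x 1 ≠ 0 := by
        by_contra h
        push_neg at h
        apply hx
        ext i; fin_cases i <;> simp [h.1, h.2]
      have hdet : c ^ 2 < a ^ 2 * b ^ 2 := by
        nlinarith [habs, abs_nonneg c, sq_abs c]
      have hq : dotProduct (star x) ((!![a ^ 2, c; c, b ^ 2]) *ᵥ x)
          = a ^ 2 * x 0 ^ 2 + 2 * c * (x 0 * x 1) + b ^ 2 * x 1 ^ 2 := by
        simp [dotProduct, mulVec, Fin.sum_univ_two]
        ring
      have hq2 : (x.sum fun i xi => x.sum fun j xj => star xi * !![a ^ 2, c; c, b ^ 2] i j * xj)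
          = a ^ 2 * x 0 ^ 2 + 2 * c * (x 0 * x 1) + b ^ 2 * x 1 ^ 2 := by
        rw [← hq]; simp [Finsupp.sum_fintype, dotProduct, mulVec, Fin.sum_univ_two]; ring
      rw [hq2]; clear hq2
      clear hq hx hc hm hk hS hr hS2 hS_gt hS_lt hS_nonneg hkr hmr hc_pos hc_lt habs
        hk_pos hr_pos hD hab0 hden hs
      by_cases h1 : x 1 = 0
      · have h0 : x 0 ≠ 0 := by tauto
        rw [h1]
        have := mul_pos (pow_pos ha 2) (pow_two_pos_of_ne_zero h0)
        nlinarith [this]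
      · have h2 : 0 < a ^ 2 * (a ^ 2 * x 0 ^ 2 + 2 * c * (x 0 * x 1) + b ^ 2 * x 1 ^ 2) := by
          nlinarith [sq_nonneg (a ^ 2 * x 0 + c * x 1),
            mul_pos (sub_pos.mpr hdet) (pow_two_pos_of_ne_zero h1)]
        by_contra hP
        have h3 : a ^ 2 * (a ^ 2 * x 0 ^ 2 + 2 * c * (x 0 * x 1) + b ^ 2 * x 1 ^ 2) ≤ 0 :=
          mul_nonpos_of_nonneg_of_nonpos (sq_nonneg a) (not_lt.mp hP)
        linarith
  · have ha' : (a : ℝ) ≠ 0 := ne_of_gt ha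
    have key : ε * c = m * (a ^ 2 * b ^ 2 - c ^ 2) := by
      rw [hc]
      linear_combination (m * (k * r + a * b)) * hkr +
        ((S - ε / 2) ^ 2 * r - k ^ 2 * r) * hmr + r * hS2
    rw [key]
    field_simp
end
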